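/- (Proposition: the envelope premium formula is necessary for incentive compatibility.) If a menu (r_θ, p_θ)_{θ∈Θ} is incentive compatible, then for every θ ∈ Θ the premium satisfies the premium formula (★): p_θ = p_{θ̲} + ∫₀^{L̄} (1 − g_{θ̲}(F_{θ̲}(l))) r_{θ̲}(l) dl − ∫_{θ̲}^{θ} ∫₀^{L̄} D(s,l) r_s(l) dl ds − ∫₀^{L̄} (1 − g_θ(F_θ(l))) r_θ(l) dl. -/

import Mathlib

open MeasureTheory Set Filter Topology

/-- FTC for globally Lipschitz functions on `ℝ`: there is a function `d` which is a.e. a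
derivative of `V`, and whose integral over any interval recovers the increment of `V`.
Proved via the Stieltjes measure of the monotone function `V + K·id` and
Radon–Nikodym differentiation. -/
lemma lipschitz_ftc {K : NNReal} {V : ℝ → ℝ} (hV : LipschitzWith K V) :
    ∃ d : ℝ → ℝ, (∀ᵐ x, HasDerivAt V (d x) x) ∧
      ∀ a b : ℝ, a ≤ b → (∫ x in Set.Ioc a b, d x) = V b - V a := by
  have hdist : ∀ x y : ℝ, x ≤ y → |V x - V y| ≤ K * (y - x) := by
    intro x y hxy
    have := hV.dist_le_mul x y
    rw [Real.dist_eq, Real.dist_eq, abs_sub_comm x y, abs_of_nonneg (sub_nonneg.2 hxy)] at this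
    exact this
  set M : ℝ → ℝ := fun x => V x + K * x with hMdef
  set N : ℝ → ℝ := fun x => K * x - V x with hNdef
  have hM : Monotone M := by
    intro x y hxy
    have h1 := abs_le.1 (hdist x y hxy)
    simp only [M]; linarith [h1.2]
  have hN : Monotone N := by
    intro x y hxy
    have h1 := abs_le.1 (hdist x y hxy)
    simp only [N]; linarith [h1.1]
  have hMc : Continuous M := (hV.continuous).add (continuous_const.mul continuous_id)
  have hNc : Continuous N := (continuous_const.mul continuous_id).sub hV.continuous
  have hMS : ∀ x, hM.stieltjesFunction x = M x := by
    intro x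
    rw [hM.stieltjesFunction_eq]
    exact rightLim_eq_of_tendsto
      ((hMc.tendsto x).mono_left nhdsWithin_le_nhds)
  have hNS : ∀ x, hN.stieltjesFunction x = N x := by
    intro x
    rw [hN.stieltjesFunction_eq]
    exact rightLim_eq_of_tendsto
      ((hNc.tendsto x).mono_left nhdsWithin_le_nhds)
  set μ := hM.stieltjesFunction.measure with hμdef
  set ν := hN.stieltjesFunction.measure with hνdef
  have hμIoc : ∀ a b : ℝ, μ (Ioc a b) = ENNReal.ofReal (M b - M a) := by
    intro a b; rw [hμdef, StieltjesFunction.measure_Ioc, hMS, hMS]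
  have hνIoc : ∀ a b : ℝ, ν (Ioc a b) = ENNReal.ofReal (N b - N a) := by
    intro a b; rw [hνdef, StieltjesFunction.measure_Ioc, hNS, hNS]
  have hsum : μ + ν = (ENNReal.ofReal (2 * K)) • volume := by
    refine MeasureTheory.Measure.ext_of_Ioc' _ _ (fun a b hab => ?_) (fun a b hab => ?_)
    · rw [Measure.add_apply, hμIoc, hνIoc]
      exact ENNReal.add_ne_top.2 ⟨ENNReal.ofReal_ne_top, ENNReal.ofReal_ne_top⟩
    · rw [Measure.add_apply, hμIoc, hνIoc, Measure.smul_apply, smul_eq_mul,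
        Real.volume_Ioc, ← ENNReal.ofReal_mul (by positivity)]
      rw [← ENNReal.ofReal_add (sub_nonneg.2 (hM hab.le)) (sub_nonneg.2 (hN hab.le))]
      congr 1
      simp only [M, N]; ring
  have hac : μ ≪ volume := by
    intro s hs
    have h1 : μ s ≤ (μ + ν) s := Measure.le_iff'.1 (Measure.le_add_right le_rfl) s
    rw [hsum, Measure.smul_apply, smul_eq_mul, hs, mul_zero] at h1
    exact le_antisymm h1 zero_le
  set d₀ : ℝ → ℝ := fun x => (μ.rnDeriv volume x).toReal with hd₀def
  refine ⟨fun x => d₀ x - K, ?_, ?_⟩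
  · filter_upwards [hM.ae_hasDerivAt] with x hx
    have h2 : HasDerivAt (fun y => M y - K * y) (d₀ x - K * 1) x :=
      hx.sub ((hasDerivAt_id x).const_mul (K : ℝ))
    have h3 : (fun y => M y - K * y) = V := by funext y; simp [M]
    rw [h3] at h2; simpa using h2
  · intro a b hab
    have hfin : ∀ᵐ x, μ.rnDeriv volume x < ⊤ := Measure.rnDeriv_lt_top μ volume
    have hint : ∫⁻ x in Ioc a b, μ.rnDeriv volume x = μ (Ioc a b) :=
      Measure.setLIntegral_rnDeriv hac _
    have hIocne : ∫⁻ x in Ioc a b, μ.rnDeriv volume x ≠ ⊤ := by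
      rw [hint, hμIoc]; exact ENNReal.ofReal_ne_top
    have hIntd₀ : IntegrableOn d₀ (Ioc a b) volume :=
      integrable_toReal_of_lintegral_ne_top
        ((μ.measurable_rnDeriv volume).aemeasurable.restrict) hIocne
    have h0 : ∫ x in Ioc a b, d₀ x = (μ (Ioc a b)).toReal := by
      rw [← hint, hd₀def]
      exact integral_toReal ((μ.measurable_rnDeriv volume).aemeasurable.restrict)
        (ae_restrict_of_ae hfin)
    rw [integral_sub hIntd₀ (integrableOn_const measure_Ioc_lt_top.ne), h0, hμIoc,
      ENNReal.toReal_ofReal (sub_nonneg.2 (hM hab)),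
      setIntegral_const, Real.volume_real_Ioc_of_le (by linarith)]
    simp only [M, smul_eq_mul]; ring

/-- A derivative (within a nondegenerate closed interval) of a Lipschitz function is
bounded by the Lipschitz constant. -/
lemma deriv_bound_of_lipschitzOn {a b : ℝ} (hab : a < b) {f : ℝ → ℝ} {d : ℝ} {C : NNReal}
    {x : ℝ} (hx : x ∈ Set.Icc a b) (hf : HasDerivWithinAt f d (Set.Icc a b) x)
    (hlip : LipschitzOnWith C f (Set.Icc a b)) : |d| ≤ C := by
  have hne : (𝓝[Set.Icc a b \ {x}] x).NeBot := by
    rcases lt_or_ge x b with h | h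
    · have hsub : Set.Ioo x b ⊆ Set.Icc a b \ {x} := fun y hy =>
        ⟨⟨hx.1.trans hy.1.le, hy.2.le⟩, ne_of_gt hy.1⟩
      exact (left_nhdsWithin_Ioo_neBot h).mono (nhdsWithin_mono _ hsub)
    · have hxb : x = b := le_antisymm hx.2 h
      have hsub : Set.Ioo a x ⊆ Set.Icc a b \ {x} := fun y hy =>
        ⟨⟨hy.1.le, hy.2.le.trans hx.2⟩, ne_of_lt hy.2⟩
      have : (𝓝[Set.Ioo a x] x).NeBot := by
        subst hxb; exact right_nhdsWithin_Ioo_neBot hab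
      exact this.mono (nhdsWithin_mono _ hsub)
  have hT : Tendsto (slope f x) (𝓝[Set.Icc a b \ {x}] x) (𝓝 d) :=
    hasDerivWithinAt_iff_tendsto_slope.1 hf
  have hEv : ∀ᶠ y in 𝓝[Set.Icc a b \ {x}] x, |slope f x y| ≤ C := by
    filter_upwards [self_mem_nhdsWithin] with y hy
    have hyx : y ≠ x := fun h => hy.2 (by simp [h])
    rw [slope_def_field, div_eq_mul_inv, abs_mul, abs_inv]
    have h1 : |f y - f x| ≤ C * |y - x| := by
      have := hlip.dist_le_mul y hy.1 x hx
      simpa [Real.dist_eq] using this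
    have h2 : 0 < |y - x| := abs_pos.2 (sub_ne_zero.2 hyx)
    calc |f y - f x| * |y - x|⁻¹ ≤ C * |y - x| * |y - x|⁻¹ :=
          mul_le_mul_of_nonneg_right h1 (by positivity)
      _ = C := by field_simp
  exact le_of_tendsto (hT.abs) hEv

/-- The agent's Yaari dual utility: `U_θ(r, p) = -p - ∫₀^{L̄} (1 - g_θ(F_θ(l))) r(l) dl`. -/
noncomputable def Uag (g F : ℝ → ℝ → ℝ) (Lbar θ : ℝ) (rr : ℝ → ℝ) (pp : ℝ) : ℝ :=
  -pp - ∫ l in (0 : ℝ)..Lbar, (1 - g θ (F θ l)) * rr l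

/-- **The envelope premium formula is necessary for incentive compatibility.** If the menu
`(r_θ, p_θ)_{θ∈Θ}` is incentive compatible, then every premium satisfies (★). -/
theorem premium_formula_of_IC
    (θlow θhigh Lbar : ℝ) (hθ : θlow < θhigh) (hL : 0 < Lbar)
    (g : ℝ → ℝ → ℝ) (F : ℝ → ℝ → ℝ)
    (hg_mono : ∀ θ ∈ Set.Icc θlow θhigh, MonotoneOn (g θ) (Set.Icc (0 : ℝ) 1))
    (hg0 : ∀ θ ∈ Set.Icc θlow θhigh, g θ 0 = 0)
    (hg1 : ∀ θ ∈ Set.Icc θlow θhigh, g θ 1 = 1)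
    (hg_range : ∀ θ ∈ Set.Icc θlow θhigh, ∀ t ∈ Set.Icc (0 : ℝ) 1,
      g θ t ∈ Set.Icc (0 : ℝ) 1)
    (hF_range : ∀ θ ∈ Set.Icc θlow θhigh, ∀ l ∈ Set.Icc (0 : ℝ) Lbar,
      F θ l ∈ Set.Icc (0 : ℝ) 1)
    (hgF_meas : Measurable fun x : ℝ × ℝ => g x.1 (F x.1 x.2))
    (r : ℝ → ℝ → ℝ) (p : ℝ → ℝ)
    (hr_meas : Measurable (Function.uncurry r)) (hp_meas : Measurable p)
    (hr_range : ∀ θ ∈ Set.Icc θlow θhigh, ∀ l ∈ Set.Icc (0 : ℝ) Lbar,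
      r θ l ∈ Set.Icc (0 : ℝ) 1)
    (D : ℝ → ℝ → ℝ)
    (hD : ∀ l ∈ Set.Icc (0 : ℝ) Lbar, ∀ s ∈ Set.Icc θlow θhigh,
      HasDerivWithinAt (fun t => g t (F t l)) (D s l) (Set.Icc θlow θhigh) s)
    (hLip : ∃ C : NNReal, ∀ l ∈ Set.Icc (0 : ℝ) Lbar,
      LipschitzOnWith C (fun s => g s (F s l)) (Set.Icc θlow θhigh))
    (hD_meas : Measurable (Function.uncurry D))
    (hIC : ∀ θ ∈ Set.Icc θlow θhigh, ∀ θ' ∈ Set.Icc θlow θhigh,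
      Uag g F Lbar θ (r θ') (p θ') ≤ Uag g F Lbar θ (r θ) (p θ)) :
    ∀ θ ∈ Set.Icc θlow θhigh,
      p θ = p θlow + (∫ l in (0 : ℝ)..Lbar, (1 - g θlow (F θlow l)) * r θlow l)
        - (∫ s in θlow..θ, ∫ l in (0 : ℝ)..Lbar, D s l * r s l)
        - ∫ l in (0 : ℝ)..Lbar, (1 - g θ (F θ l)) * r θ l := by
  obtain ⟨C, hC⟩ := hLip
  intro θ hθmem
  -- basic measurability of sections
  have hgFm : ∀ s : ℝ, Measurable fun l => g s (F s l) := fun s =>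
    hgF_meas.comp (measurable_prodMk_left)
  have hrm : ∀ m : ℝ, Measurable fun l => r m l := fun m =>
    hr_meas.comp (measurable_prodMk_left)
  have hDmeas_l : ∀ s : ℝ, Measurable fun l => D s l := fun s =>
    hD_meas.comp (measurable_prodMk_left)
  have hDmeas_s : ∀ l : ℝ, Measurable fun s => D s l := fun l =>
    hD_meas.comp (measurable_id.prodMk measurable_const)
  -- basic bounds
  have hIocIcc : Set.Ioc (0:ℝ) Lbar ⊆ Set.Icc 0 Lbar := Set.Ioc_subset_Icc_self
  have hgFb : ∀ s ∈ Set.Icc θlow θhigh, ∀ l ∈ Set.Icc (0:ℝ) Lbar,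
      g s (F s l) ∈ Set.Icc (0:ℝ) 1 := fun s hs l hl => hg_range s hs _ (hF_range s hs l hl)
  have habs : ∀ x : ℝ, x ∈ Set.Icc (0:ℝ) 1 → |x| ≤ 1 := fun x hx =>
    abs_le.2 ⟨by linarith [hx.1], hx.2⟩
  have habs' : ∀ x : ℝ, x ∈ Set.Icc (0:ℝ) 1 → |1 - x| ≤ 1 := fun x hx =>
    abs_le.2 ⟨by linarith [hx.2], by linarith [hx.1]⟩
  have hμLbar : volume (Set.Ioc (0:ℝ) Lbar) ≠ ⊤ := measure_Ioc_lt_top.ne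
  have hDb : ∀ l ∈ Set.Icc (0:ℝ) Lbar, ∀ s ∈ Set.Icc θlow θhigh, |D s l| ≤ C := fun l hl s hs =>
    deriv_bound_of_lipschitzOn hθ hs (hD l hl s hs) (hC l hl)
  -- integrability of the various integrands in `l`
  have hInt2 : ∀ s ∈ Set.Icc θlow θhigh, ∀ m ∈ Set.Icc θlow θhigh,
      IntegrableOn (fun l => g s (F s l) * r m l) (Set.Ioc 0 Lbar) volume := by
    intro s hs m hm
    refine Measure.integrableOn_of_bounded (M := 1) hμLbar
      (((hgFm s).mul (hrm m)).aestronglyMeasurable) ?_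
    refine (ae_restrict_iff' measurableSet_Ioc).2 (Filter.Eventually.of_forall fun l hl => ?_)
    rw [Real.norm_eq_abs, abs_mul]
    have h1 := habs _ (hgFb s hs l (hIocIcc hl))
    have h2 := habs _ (hr_range m hm l (hIocIcc hl))
    nlinarith [abs_nonneg (g s (F s l)), abs_nonneg (r m l)]
  have hInt1 : ∀ s ∈ Set.Icc θlow θhigh, ∀ m ∈ Set.Icc θlow θhigh,
      IntegrableOn (fun l => (1 - g s (F s l)) * r m l) (Set.Ioc 0 Lbar) volume := by
    intro s hs m hm
    refine Measure.integrableOn_of_bounded (M := 1) hμLbar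
      (((measurable_const.sub (hgFm s)).mul (hrm m)).aestronglyMeasurable) ?_
    refine (ae_restrict_iff' measurableSet_Ioc).2 (Filter.Eventually.of_forall fun l hl => ?_)
    rw [Real.norm_eq_abs, abs_mul]
    have h1 := habs' _ (hgFb s hs l (hIocIcc hl))
    have h2 := habs _ (hr_range m hm l (hIocIcc hl))
    nlinarith [abs_nonneg (1 - g s (F s l)), abs_nonneg (r m l)]
  have hIntr : ∀ m ∈ Set.Icc θlow θhigh,
      IntegrableOn (fun l => r m l) (Set.Ioc 0 Lbar) volume := by
    intro m hm
    refine Measure.integrableOn_of_bounded (M := 1) hμLbar (hrm m).aestronglyMeasurable ?_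
    refine (ae_restrict_iff' measurableSet_Ioc).2 (Filter.Eventually.of_forall fun l hl => ?_)
    rw [Real.norm_eq_abs]
    exact habs _ (hr_range m hm l (hIocIcc hl))
  -- `Uag` as a set integral
  have hUag : ∀ s m : ℝ, Uag g F Lbar s (r m) (p m)
      = -p m - ∫ l in Set.Ioc 0 Lbar, (1 - g s (F s l)) * r m l := by
    intro s m
    simp only [Uag]
    rw [intervalIntegral.integral_of_le hL.le]
  -- key identity 1: utility difference across types for a fixed contract
  have key1 : ∀ θ1 ∈ Set.Icc θlow θhigh, ∀ θ2 ∈ Set.Icc θlow θhigh, ∀ m ∈ Set.Icc θlow θhigh,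
      Uag g F Lbar θ2 (r m) (p m) - Uag g F Lbar θ1 (r m) (p m)
        = (∫ l in Set.Ioc 0 Lbar, g θ2 (F θ2 l) * r m l)
          - ∫ l in Set.Ioc 0 Lbar, g θ1 (F θ1 l) * r m l := by
    intro θ1 h1 θ2 h2 m hm
    rw [hUag, hUag]
    have e0 : ∀ s ∈ Set.Icc θlow θhigh,
        ∫ l in Set.Ioc (0:ℝ) Lbar, (1 - g s (F s l)) * r m l
          = (∫ l in Set.Ioc (0:ℝ) Lbar, r m l)
            - ∫ l in Set.Ioc (0:ℝ) Lbar, g s (F s l) * r m l := by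
      intro s hs
      rw [← integral_sub (hIntr m hm) (hInt2 s hs m hm)]
      exact setIntegral_congr_fun measurableSet_Ioc fun l _ => by ring
    rw [e0 θ1 h1, e0 θ2 h2]
    ring
  -- key identity 2: FTC in the type variable, for each loss level
  have key2 : ∀ l ∈ Set.Icc (0:ℝ) Lbar, ∀ θ1 ∈ Set.Icc θlow θhigh, ∀ θ2 ∈ Set.Icc θlow θhigh,
      θ1 ≤ θ2 → g θ2 (F θ2 l) - g θ1 (F θ1 l) = ∫ s in Set.Ioc θ1 θ2, D s l := by
    intro l hl θ1 h1 θ2 h2 h12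
    have hcont : ContinuousOn (fun t => g t (F t l)) (Set.Icc θ1 θ2) :=
      ((hC l hl).continuousOn).mono (Set.Icc_subset_Icc h1.1 h2.2)
    have hderiv : ∀ x ∈ Set.Ioo θ1 θ2,
        HasDerivWithinAt (fun t => g t (F t l)) (D x l) (Set.Ioi x) x := by
      intro x hx
      have hxm : x ∈ Set.Icc θlow θhigh := ⟨h1.1.trans hx.1.le, hx.2.le.trans h2.2⟩
      have hnb : Set.Icc θlow θhigh ∈ 𝓝 x :=
        Icc_mem_nhds (h1.1.trans_lt hx.1) (hx.2.trans_le h2.2)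
      exact ((hD l hl x hxm).hasDerivAt hnb).hasDerivWithinAt
    have hint : IntervalIntegrable (fun s => D s l) volume θ1 θ2 := by
      rw [intervalIntegrable_iff, Set.uIoc_of_le h12]
      refine Measure.integrableOn_of_bounded (M := C) measure_Ioc_lt_top.ne
        (hDmeas_s l).aestronglyMeasurable ?_
      refine (ae_restrict_iff' measurableSet_Ioc).2 (Filter.Eventually.of_forall fun s hs => ?_)
      rw [Real.norm_eq_abs]
      exact hDb l hl s ⟨h1.1.trans hs.1.le, hs.2.trans h2.2⟩
    have := intervalIntegral.integral_eq_sub_of_hasDeriv_right_of_le h12 hcont hderiv hint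
    rw [intervalIntegral.integral_of_le h12] at this
    exact this.symm
  -- key identity 3: Fubini
  have key3 : ∀ θ1 ∈ Set.Icc θlow θhigh, ∀ θ2 ∈ Set.Icc θlow θhigh, θ1 ≤ θ2 →
      ∀ m ∈ Set.Icc θlow θhigh,
      (∫ l in Set.Ioc (0:ℝ) Lbar, (g θ2 (F θ2 l) - g θ1 (F θ1 l)) * r m l)
        = ∫ s in Set.Ioc θ1 θ2, ∫ l in Set.Ioc (0:ℝ) Lbar, D s l * r m l := by
    intro θ1 h1 θ2 h2 h12 m hm
    have hintf : Integrable (Function.uncurry fun l s => D s l * r m l)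
        ((volume.restrict (Set.Ioc (0:ℝ) Lbar)).prod (volume.restrict (Set.Ioc θ1 θ2))) := by
      rw [Measure.prod_restrict]
      refine Measure.integrableOn_of_bounded (M := C) ?_ ?_ ?_
      · rw [Measure.prod_prod]
        exact ENNReal.mul_ne_top measure_Ioc_lt_top.ne measure_Ioc_lt_top.ne
      · exact ((hD_meas.comp measurable_swap).mul ((hrm m).comp measurable_fst)).aestronglyMeasurable
      · refine (ae_restrict_iff' (measurableSet_Ioc.prod measurableSet_Ioc)).2
          (Filter.Eventually.of_forall ?_)
        rintro ⟨l, s⟩ ⟨hl, hs⟩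
        rw [Function.uncurry, Real.norm_eq_abs, abs_mul]
        have hd := hDb l (hIocIcc hl) s ⟨h1.1.trans hs.1.le, hs.2.trans h2.2⟩
        have hr' := habs _ (hr_range m hm l (hIocIcc hl))
        nlinarith [abs_nonneg (D s l), abs_nonneg (r m l)]
    have hswap := MeasureTheory.integral_integral_swap
      (μ := volume.restrict (Set.Ioc (0:ℝ) Lbar)) (ν := volume.restrict (Set.Ioc θ1 θ2))
      (f := fun l s => D s l * r m l) hintf
    calc (∫ l in Set.Ioc (0:ℝ) Lbar, (g θ2 (F θ2 l) - g θ1 (F θ1 l)) * r m l)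
        = ∫ l in Set.Ioc (0:ℝ) Lbar, ∫ s in Set.Ioc θ1 θ2, D s l * r m l := by
          refine setIntegral_congr_fun measurableSet_Ioc fun l hl => ?_
          rw [key2 l (hIocIcc hl) θ1 h1 θ2 h2 h12, ← integral_mul_const]
      _ = _ := hswap
  -- combination: utility difference = double integral
  have key13 : ∀ θ1 ∈ Set.Icc θlow θhigh, ∀ θ2 ∈ Set.Icc θlow θhigh, θ1 ≤ θ2 →
      ∀ m ∈ Set.Icc θlow θhigh,
      Uag g F Lbar θ2 (r m) (p m) - Uag g F Lbar θ1 (r m) (p m)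
        = ∫ s in Set.Ioc θ1 θ2, ∫ l in Set.Ioc (0:ℝ) Lbar, D s l * r m l := by
    intro θ1 h1 θ2 h2 h12 m hm
    rw [key1 θ1 h1 θ2 h2 m hm, ← key3 θ1 h1 θ2 h2 h12 m hm,
      ← integral_sub (hInt2 θ2 h2 m hm) (hInt2 θ1 h1 m hm)]
    exact setIntegral_congr_fun measurableSet_Ioc fun l _ => by ring
  -- the value function
  set V : ℝ → ℝ := fun t => Uag g F Lbar t (r t) (p t) with hVdef
  -- sandwich inequalities from incentive compatibility
  have hsand : ∀ θ1 ∈ Set.Icc θlow θhigh, ∀ θ2 ∈ Set.Icc θlow θhigh, θ1 ≤ θ2 →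
      (∫ s in Set.Ioc θ1 θ2, ∫ l in Set.Ioc (0:ℝ) Lbar, D s l * r θ1 l) ≤ V θ2 - V θ1
      ∧ V θ2 - V θ1 ≤ ∫ s in Set.Ioc θ1 θ2, ∫ l in Set.Ioc (0:ℝ) Lbar, D s l * r θ2 l := by
    intro θ1 h1 θ2 h2 h12
    have hI1 := hIC θ2 h2 θ1 h1
    have hI2 := hIC θ1 h1 θ2 h2
    have e1 := key13 θ1 h1 θ2 h2 h12 θ1 h1
    have e2 := key13 θ1 h1 θ2 h2 h12 θ2 h2
    have hv1 : V θ1 = Uag g F Lbar θ1 (r θ1) (p θ1) := rfl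
    have hv2 : V θ2 = Uag g F Lbar θ2 (r θ2) (p θ2) := rfl
    constructor
    · rw [← e1, hv1, hv2]; linarith
    · rw [← e2, hv1, hv2]; linarith
  -- uniform bound on the double integrals
  have hbnd : ∀ θ1 ∈ Set.Icc θlow θhigh, ∀ θ2 ∈ Set.Icc θlow θhigh, θ1 ≤ θ2 →
      ∀ m ∈ Set.Icc θlow θhigh,
      |∫ s in Set.Ioc θ1 θ2, ∫ l in Set.Ioc (0:ℝ) Lbar, D s l * r m l|
        ≤ C * Lbar * (θ2 - θ1) := by
    intro θ1 h1 θ2 h2 h12 m hm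
    have inner : ∀ s ∈ Set.Ioc θ1 θ2, ‖∫ l in Set.Ioc (0:ℝ) Lbar, D s l * r m l‖ ≤ C * Lbar := by
      intro s hs
      have hb : ∀ l ∈ Set.Ioc (0:ℝ) Lbar, ‖D s l * r m l‖ ≤ (C : ℝ) := by
        intro l hl
        rw [Real.norm_eq_abs, abs_mul]
        have hd := hDb l (hIocIcc hl) s ⟨h1.1.trans hs.1.le, hs.2.trans h2.2⟩
        have hr' := habs _ (hr_range m hm l (hIocIcc hl))
        nlinarith [abs_nonneg (D s l), abs_nonneg (r m l)]
      have := norm_setIntegral_le_of_norm_le_const (μ := volume)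
        measure_Ioc_lt_top hb
      rwa [Real.volume_real_Ioc_of_le (by linarith), sub_zero] at this
    have outer := norm_setIntegral_le_of_norm_le_const (μ := volume)
      measure_Ioc_lt_top inner
    rwa [Real.volume_real_Ioc_of_le (by linarith), Real.norm_eq_abs] at outer
  -- V is Lipschitz on the type interval
  have hVd : ∀ a ∈ Set.Icc θlow θhigh, ∀ b ∈ Set.Icc θlow θhigh, a ≤ b →
      |V b - V a| ≤ C * Lbar * (b - a) := by
    intro a ha b hb hab
    have hs := hsand a ha b hb hab
    have hb1 := abs_le.1 (hbnd a ha b hb hab a ha)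
    have hb2 := abs_le.1 (hbnd a ha b hb hab b hb)
    exact abs_le.2 ⟨by linarith [hs.1, hb1.1], by linarith [hs.2, hb2.2]⟩
  have hVlip : LipschitzOnWith (C * Real.toNNReal Lbar) V (Set.Icc θlow θhigh) := by
    rw [lipschitzOnWith_iff_dist_le_mul]
    intro x hx y hy
    have hKr : ((C * Real.toNNReal Lbar : NNReal) : ℝ) = (C : ℝ) * Lbar := by
      rw [NNReal.coe_mul, Real.coe_toNNReal _ hL.le]
    rw [Real.dist_eq, Real.dist_eq, hKr]
    rcases le_total x y with h | h
    · have := hVd x hx y hy h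
      rw [abs_sub_comm (V x) (V y), abs_sub_comm x y,
        abs_of_nonneg (sub_nonneg.2 h)]
      exact this.trans (le_of_eq rfl)
    · have := hVd y hy x hx h
      rw [abs_of_nonneg (sub_nonneg.2 h)]
      exact this.trans (le_of_eq rfl)
  -- extend V to a globally Lipschitz function and apply the FTC for Lipschitz functions
  obtain ⟨Vt, hVtlip, hVeq⟩ := hVlip.extend_real
  obtain ⟨d, hd_ae, hd_int⟩ := lipschitz_ftc hVtlip
  -- a.e. identification of the derivative (envelope formula)
  have hmatch : ∀ᵐ x : ℝ, x ∈ Set.Ioo θlow θhigh →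
      d x = ∫ l in Set.Ioc (0:ℝ) Lbar, D x l * r x l := by
    filter_upwards [hd_ae] with x hdx hxI
    have hxm : x ∈ Set.Icc θlow θhigh := Set.Ioo_subset_Icc_self hxI
    have hIccnhds : Set.Icc θlow θhigh ∈ 𝓝 x := Icc_mem_nhds hxI.1 hxI.2
    set ε := min (x - θlow) (θhigh - x) with hεdef
    have hεpos : 0 < ε := lt_min (by linarith [hxI.1]) (by linarith [hxI.2])
    have hball : Metric.ball x ε ⊆ Set.Icc θlow θhigh := by
      intro y hy
      rw [Metric.mem_ball, Real.dist_eq] at hy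
      have h1 := abs_lt.1 hy
      have h2 := min_le_left (x - θlow) (θhigh - x)
      have h3 := min_le_right (x - θlow) (θhigh - x)
      constructor <;> [linarith [h1.1]; linarith [h1.2]]
    -- differentiation under the integral sign
    have hB := hasDerivAt_integral_of_dominated_loc_of_lip
        (μ := volume.restrict (Set.Ioc (0:ℝ) Lbar))
        (F := fun s l => g s (F s l) * r x l) (F' := fun l => D x l * r x l)
        (x₀ := x) (bound := fun _ => (C : ℝ)) (Metric.ball_mem_nhds x hεpos)
        (Filter.Eventually.of_forall fun s => ((hgFm s).mul (hrm x)).aestronglyMeasurable)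
        (hInt2 x hxm x hxm)
        (((hDmeas_l x).mul (hrm x)).aestronglyMeasurable)
        ?_ ?_ ?_
    rotate_left
    · -- Lipschitz in the parameter
      refine (ae_restrict_iff' measurableSet_Ioc).2 (Filter.Eventually.of_forall fun l hl => ?_)
      rw [lipschitzOnWith_iff_dist_le_mul]
      intro s hs t ht
      have hrb := habs _ (hr_range x hxm l (hIocIcc hl))
      have hlips := (hC l (hIocIcc hl)).dist_le_mul s (hball hs) t (hball ht)
      rw [Real.dist_eq, Real.dist_eq] at hlips ⊢
      rw [Real.coe_nnabs, abs_of_nonneg C.coe_nonneg]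
      have heq : g s (F s l) * r x l - g t (F t l) * r x l
          = (g s (F s l) - g t (F t l)) * r x l := by ring
      rw [heq, abs_mul]
      nlinarith [abs_nonneg (g s (F s l) - g t (F t l)), abs_nonneg (r x l),
        abs_nonneg (s - t), C.coe_nonneg]
    · exact integrableOn_const measure_Ioc_lt_top.ne
    · -- pointwise differentiability in the parameter
      refine (ae_restrict_iff' measurableSet_Ioc).2 (Filter.Eventually.of_forall fun l hl => ?_)
      exact ((hD l (hIocIcc hl) x hxm).hasDerivAt hIccnhds).mul_const (r x l)
    -- x is a local minimum of Vt - B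
    have hGd : HasDerivAt (fun y => Vt y - ∫ l in Set.Ioc (0:ℝ) Lbar, g y (F y l) * r x l)
        (d x - ∫ l in Set.Ioc (0:ℝ) Lbar, D x l * r x l) x := hdx.sub hB.2
    have hmin : IsLocalMin (fun y => Vt y - ∫ l in Set.Ioc (0:ℝ) Lbar, g y (F y l) * r x l) x := by
      filter_upwards [hIccnhds] with y hy
      have e := key1 x hxm y hy x hxm
      have hI := hIC y hy x hxm
      have hVy : Vt y = V y := (hVeq hy).symm
      have hVx : Vt x = V x := (hVeq hxm).symm
      have hv1 : V x = Uag g F Lbar x (r x) (p x) := rfl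
      have hv2 : V y = Uag g F Lbar y (r y) (p y) := rfl
      simp only [hVy, hVx, hv1, hv2]
      linarith
    have hzero := hmin.hasDerivAt_eq_zero hGd
    linarith [hzero]
  -- conclude: FTC from θlow to θ
  have hFTC := hd_int θlow θ hθmem.1
  have hneq : ∀ᵐ x : ℝ, x ≠ θhigh := by
    have h' : {a : ℝ | ¬ a ≠ θhigh} = {θhigh} := by ext a; simp
    rw [ae_iff, h']
    exact Real.volume_singleton
  have hcongr : (∫ x in Set.Ioc θlow θ, d x)
      = ∫ x in Set.Ioc θlow θ, ∫ l in Set.Ioc (0:ℝ) Lbar, D x l * r x l := by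
    refine setIntegral_congr_ae measurableSet_Ioc ?_
    filter_upwards [hmatch, hneq] with x hx hxne hxm
    exact hx ⟨hxm.1, lt_of_le_of_ne (hxm.2.trans hθmem.2) hxne⟩
  have hVtθ : Vt θ = V θ := (hVeq hθmem).symm
  have hVtlow : Vt θlow = V θlow := (hVeq (Set.left_mem_Icc.2 hθ.le)).symm
  have hconv : (∫ s in θlow..θ, ∫ l in (0:ℝ)..Lbar, D s l * r s l)
      = ∫ s in Set.Ioc θlow θ, ∫ l in Set.Ioc (0:ℝ) Lbar, D s l * r s l := by
    rw [intervalIntegral.integral_of_le hθmem.1]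
    exact setIntegral_congr_fun measurableSet_Ioc fun s _ =>
      intervalIntegral.integral_of_le hL.le
  have hfinal : V θ - V θlow = ∫ s in θlow..θ, ∫ l in (0:ℝ)..Lbar, D s l * r s l := by
    rw [hconv, ← hcongr, ← hVtθ, ← hVtlow]
    exact hFTC.symm
  have hVform : V θ = -p θ - ∫ l in (0:ℝ)..Lbar, (1 - g θ (F θ l)) * r θ l := rfl
  have hVlowform : V θlow
      = -p θlow - ∫ l in (0:ℝ)..Lbar, (1 - g θlow (F θlow l)) * r θlow l := rfl
  rw [hVform, hVlowform] at hfinal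
  linarith [hfinal]
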